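/- In the Section 7 setting, if two fibers of the signed fibration Γ → B are connected by a basic edge and both contain an interior vertex of Γ, then the two interior vertices are connected by a basic edge. -/
import Mathlib


open Classical

namespace GKMPaper

/-- `ℤ^m`, the weight lattice. -/
abbrev Zm (m : ℕ) := Fin m → ℤ

/-- The relation identifying a vector with its negative. -/
def pmRel (m : ℕ) (a b : Zm m) : Prop := a = b ∨ a = -b

theorem pmRel_equiv (m : ℕ) : Equivalence (pmRel m) := by
  constructor
  · intro a; exact Or.inl rfl
  · intro a b hab
    rcases hab with hh | hh
    · exact Or.inl hh.symm
    · exact Or.inr (by rw [hh, neg_neg])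
  · intro a b c h1 h2
    rcases h1 with h1 | h1 <;> rcases h2 with h2 | h2
    · exact Or.inl (h1.trans h2)
    · exact Or.inr (h1.trans h2)
    · exact Or.inr (by rw [h1, h2])
    · exact Or.inl (by rw [h1, h2, neg_neg])

def pmSetoid (m : ℕ) : Setoid (Zm m) := ⟨pmRel m, pmRel_equiv m⟩

/-- `ℤ^m / ±1`. -/
def ZmPM (m : ℕ) := Quotient (pmSetoid m)

/-- The projection `ℤ^m → ℤ^m/±1`. -/
def pm {m : ℕ} (a : Zm m) : ZmPM m := Quotient.mk (pmSetoid m) a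

/-- Linear independence over `ℤ`. -/
def Indep {m : ℕ} (a b : Zm m) : Prop :=
  ∀ c d : ℤ, c • a + d • b = 0 → c = 0 ∧ d = 0

/-- An abstract graph with finite vertex and edge sets, each edge occurring with
both orientations, and no loops. -/
structure OrGraph : Type 1 where
  V : Type
  E : Type
  fV : Fintype V
  fE : Fintype E
  dV : DecidableEq V
  dE : DecidableEq E
  src : E → V
  dst : E → V
  rev : E → E
  rev_rev : ∀ e, rev (rev e) = e
  rev_ne : ∀ e, rev e ≠ e
  src_rev : ∀ e, src (rev e) = dst e
  no_loop : ∀ e, src e ≠ dst e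

attribute [instance] OrGraph.fV OrGraph.fE OrGraph.dV OrGraph.dE

/-- A connection on a graph. -/
structure Connection (G : OrGraph) where
  t : G.E → G.E → G.E
  src_t : ∀ e f, G.src f = G.src e → G.src (t e f) = G.dst e
  t_self : ∀ e, t e e = G.rev e
  t_inv : ∀ e f, G.src f = G.src e → t (G.rev e) (t e f) = f

/-- `k`-valence. -/
def OrGraph.Regular (G : OrGraph) (k : ℕ) : Prop :=
  ∀ v : G.V, Fintype.card {e : G.E // G.src e = v} = k

def OrGraph.Adj (G : OrGraph) (v w : G.V) : Prop :=
  ∃ e, G.src e = v ∧ G.dst e = w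

def OrGraph.IsConn (G : OrGraph) : Prop :=
  ∀ v w : G.V, Relation.ReflTransGen G.Adj v w

/-- Compatibility of a connection with an unsigned axial function. -/
def UnsignedCompat {m : ℕ} (G : OrGraph) (α : G.E → ZmPM m) (C : Connection G) : Prop :=
  (∀ e f : G.E, G.src f = G.src e → e ≠ f →
      ∀ a b : Zm m, pm a = α e → pm b = α f → Indep a b) ∧
  (∀ e f : G.E, G.src f = G.src e →
      ∃ (a g : Zm m) (c : ℤ), pm a = α f ∧ pm g = α e ∧ α (C.t e f) = pm (a + c • g)) ∧
  (∀ e : G.E, α (G.rev e) = α e)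

/-- `(G, α)` is an (unsigned) abstract GKM graph of valence `k` with labels in `ℤ^m/±1`. -/
def IsGKM {m : ℕ} (G : OrGraph) (k : ℕ) (α : G.E → ZmPM m) : Prop :=
  G.Regular k ∧ G.IsConn ∧ ∃ C : Connection G, UnsignedCompat G α C

/-- Compatibility of a connection with a signed axial function. -/
def SignedCompat {m : ℕ} (G : OrGraph) (α : G.E → Zm m) (C : Connection G) : Prop :=
  (∀ e f : G.E, G.src f = G.src e → e ≠ f → Indep (α e) (α f)) ∧
  (∀ e f : G.E, G.src f = G.src e → ∃ c : ℤ, α (C.t e f) = α f + c • α e) ∧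
  (∀ e : G.E, α (G.rev e) = - α e)

/-- `(G, α)` is a signed abstract GKM graph of valence `k` with labels in `ℤ^m`. -/
def IsSignedGKM {m : ℕ} (G : OrGraph) (k : ℕ) (α : G.E → Zm m) : Prop :=
  G.Regular k ∧ G.IsConn ∧ ∃ C : Connection G, SignedCompat G α C

/-- Effectivity of an unsigned GKM graph: at every vertex, the labels of the
outgoing edges lift to a generating set of `ℤ^m`. -/
def Effective {m : ℕ} (G : OrGraph) (α : G.E → ZmPM m) : Prop :=
  ∀ v : G.V, ∃ lift : {e : G.E // G.src e = v} → Zm m,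
    (∀ e, pm (lift e) = α e.1) ∧ Submodule.span ℤ (Set.range lift) = ⊤

def SignedEffective {m : ℕ} (G : OrGraph) (α : G.E → Zm m) : Prop :=
  ∀ v : G.V,
    Submodule.span ℤ (Set.range (fun e : {e : G.E // G.src e = v} => α e.1)) = ⊤

/-- A graph fibration: a morphism sending vertices to vertices and horizontal
edges to edges, bijectively from the horizontal edges at `p` to the edges at `π(p)`. -/
structure GraphFib (G B : OrGraph) where
  onV : G.V → B.V
  onE : G.E → B.E
  src_onE : ∀ e, onV (G.src e) ≠ onV (G.dst e) → B.src (onE e) = onV (G.src e)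
  dst_onE : ∀ e, onV (G.src e) ≠ onV (G.dst e) → B.dst (onE e) = onV (G.dst e)
  rev_onE : ∀ e, onV (G.src e) ≠ onV (G.dst e) → onE (G.rev e) = B.rev (onE e)

def GraphFib.Vertical {G B : OrGraph} (π : GraphFib G B) (e : G.E) : Prop :=
  π.onV (G.src e) = π.onV (G.dst e)

def GraphFib.IsFib {G B : OrGraph} (π : GraphFib G B) : Prop :=
  ∀ p : G.V, Function.Bijective
    (fun e : {e : G.E // G.src e = p ∧ ¬ π.Vertical e} =>
      (⟨π.onE e.1, by rw [π.src_onE e.1 e.2.2, e.2.1]⟩ : {f : B.E // B.src f = π.onV p}))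

/-- The extra conditions for a (unsigned) GKM fibration, w.r.t. connections `C`, `CB`. -/
def GKMFibCompat {m : ℕ} {G B : OrGraph} (αΓ : G.E → ZmPM m) (αB : B.E → ZmPM m)
    (π : GraphFib G B) (C : Connection G) (CB : Connection B) : Prop :=
  (∀ e, ¬ π.Vertical e → αΓ e = αB (π.onE e)) ∧
  (∀ e f, G.src f = G.src e → π.Vertical f → π.Vertical (C.t e f)) ∧
  (∀ e f, G.src f = G.src e → ¬ π.Vertical e → ¬ π.Vertical f →
      ¬ π.Vertical (C.t e f) ∧ π.onE (C.t e f) = CB.t (π.onE e) (π.onE f))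

/-- `π` is a GKM fibration of unsigned GKM graphs. -/
def IsGKMFib {m : ℕ} {G B : OrGraph} (αΓ : G.E → ZmPM m) (αB : B.E → ZmPM m)
    (π : GraphFib G B) : Prop :=
  π.IsFib ∧ ∃ (C : Connection G) (CB : Connection B),
    UnsignedCompat G αΓ C ∧ UnsignedCompat B αB CB ∧ GKMFibCompat αΓ αB π C CB

def SignedGKMFibCompat {m : ℕ} {G B : OrGraph} (sΓ : G.E → Zm m) (sB : B.E → Zm m)
    (π : GraphFib G B) (C : Connection G) (CB : Connection B) : Prop :=
  (∀ e, ¬ π.Vertical e → sΓ e = sB (π.onE e)) ∧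
  (∀ e f, G.src f = G.src e → π.Vertical f → π.Vertical (C.t e f)) ∧
  (∀ e f, G.src f = G.src e → ¬ π.Vertical e → ¬ π.Vertical f →
      ¬ π.Vertical (C.t e f) ∧ π.onE (C.t e f) = CB.t (π.onE e) (π.onE f))

/-- `π` is a signed GKM fibration of signed GKM graphs. -/
def IsSignedGKMFib {m : ℕ} {G B : OrGraph} (sΓ : G.E → Zm m) (sB : B.E → Zm m)
    (π : GraphFib G B) : Prop :=
  π.IsFib ∧ ∃ (C : Connection G) (CB : Connection B),
    SignedCompat G sΓ C ∧ SignedCompat B sB CB ∧ SignedGKMFibCompat sΓ sB π C CB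

/-- `(π, ft)` is a fiberwise signed fibration: `ft` is a lift of `αΓ` on the
vertical edges, satisfying the congruence condition w.r.t. suitable connections. -/
def IsFiberwiseSigned {m : ℕ} {G B : OrGraph} (αΓ : G.E → ZmPM m) (αB : B.E → ZmPM m)
    (π : GraphFib G B) (ft : G.E → Zm m) : Prop :=
  π.IsFib ∧
  (∀ e, π.Vertical e → pm (ft e) = αΓ e) ∧
  (∀ e, π.Vertical e → ft (G.rev e) = - ft e) ∧
  ∃ (C : Connection G) (CB : Connection B),
    UnsignedCompat G αΓ C ∧ UnsignedCompat B αB CB ∧ GKMFibCompat αΓ αB π C CB ∧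
    ∀ e f, G.src f = G.src e → π.Vertical f →
      ∃ (g : Zm m) (c : ℤ), pm g = αΓ e ∧ ft (C.t e f) = ft f + c • g

/-- Isomorphism of unsigned GKM graphs. -/
structure GKMIso {m : ℕ} (G : OrGraph) (α : G.E → ZmPM m)
    (G' : OrGraph) (α' : G'.E → ZmPM m) : Type where
  fV : G.V ≃ G'.V
  fE : G.E ≃ G'.E
  φ : Zm m ≃ₗ[ℤ] Zm m
  src_comm : ∀ e, G'.src (fE e) = fV (G.src e)
  dst_comm : ∀ e, G'.dst (fE e) = fV (G.dst e)
  rev_comm : ∀ e, fE (G.rev e) = G'.rev (fE e)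
  lab : ∀ (e : G.E) (a : Zm m), pm a = α e → α' (fE e) = pm (φ a)

/-- Isomorphism of signed GKM graphs. -/
structure SignedGKMIso {m : ℕ} (G : OrGraph) (α : G.E → Zm m)
    (G' : OrGraph) (α' : G'.E → Zm m) : Type where
  fV : G.V ≃ G'.V
  fE : G.E ≃ G'.E
  φ : Zm m ≃ₗ[ℤ] Zm m
  src_comm : ∀ e, G'.src (fE e) = fV (G.src e)
  dst_comm : ∀ e, G'.dst (fE e) = fV (G.dst e)
  rev_comm : ∀ e, fE (G.rev e) = G'.rev (fE e)
  lab : ∀ e, α' (fE e) = φ (α e)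

/-- Equivalence of fiberwise signed fibrations over the same base (identity on `ℤ^m`). -/
structure FSFEquiv {m : ℕ} {G B G' : OrGraph}
    (αΓ : G.E → ZmPM m) (π : GraphFib G B) (ft : G.E → Zm m)
    (αΓ' : G'.E → ZmPM m) (π' : GraphFib G' B) (ft' : G'.E → Zm m) : Type where
  fV : G.V ≃ G'.V
  fE : G.E ≃ G'.E
  src_comm : ∀ e, G'.src (fE e) = fV (G.src e)
  dst_comm : ∀ e, G'.dst (fE e) = fV (G.dst e)
  rev_comm : ∀ e, fE (G.rev e) = G'.rev (fE e)
  lab : ∀ e, αΓ' (fE e) = αΓ e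
  baseV : ∀ p, π'.onV (fV p) = π.onV p
  baseE : ∀ e, ¬ π.Vertical e → π'.onE (fE e) = π.onE e
  fiblab : ∀ e, π.Vertical e → ft' (fE e) = ft e

/-- Equivalence of signed GKM fibrations over the same base (identity on `ℤ^m`). -/
structure SFEquiv {m : ℕ} {G B G' : OrGraph}
    (sΓ : G.E → Zm m) (π : GraphFib G B)
    (sΓ' : G'.E → Zm m) (π' : GraphFib G' B) : Type where
  fV : G.V ≃ G'.V
  fE : G.E ≃ G'.E
  src_comm : ∀ e, G'.src (fE e) = fV (G.src e)
  dst_comm : ∀ e, G'.dst (fE e) = fV (G.dst e)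
  rev_comm : ∀ e, fE (G.rev e) = G'.rev (fE e)
  lab : ∀ e, sΓ' (fE e) = sΓ e
  baseV : ∀ p, π'.onV (fV p) = π.onV p
  baseE : ∀ e, ¬ π.Vertical e → π'.onE (fE e) = π.onE e

/-- Realizing `ℤ²` inside `ℝ² = ℂ`. -/
noncomputable def toC (a : Zm 2) : ℂ := (a 0 : ℝ) + (a 1 : ℝ) * Complex.I

def cross (a b : ℂ) : ℝ := a.re * b.im - a.im * b.re

/-- A vertex of a signed GKM graph with labels in `ℤ²` is interior if the cone
spanned by the labels of the edges emanating from it is all of `ℝ²`. -/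
def InteriorVtx (G : OrGraph) (α : G.E → Zm 2) (p : G.V) : Prop :=
  ∀ x : ℂ, ∃ c : G.E → ℝ, (∀ e, 0 ≤ c e) ∧
    x = ∑ e ∈ Finset.univ.filter (fun e : G.E => G.src e = p), c e • toC (α e)

/-- The angle from `w` to `w'`, represented in `[0, 2π)` if `ε = true`,
and in `(-2π, 0]` if `ε = false`. -/
noncomputable def angTo (ε : Bool) (w w' : ℂ) : ℝ :=
  if ε then (if (w' / w).arg < 0 then (w' / w).arg + 2 * Real.pi else (w' / w).arg)
  else (if 0 < (w' / w).arg then (w' / w).arg - 2 * Real.pi else (w' / w).arg)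

/-- The winding number of a cyclic sequence of vectors w.r.t. the orientation `ε`. -/
noncomputable def winding {nn : ℕ} [NeZero nn] (w : ZMod nn → ℂ) (ε : Bool) : ℝ :=
  (1 / (2 * Real.pi)) * ∑ i : ZMod nn, |angTo ε (w i) (w (i + 1))|

def LocallyConvex {nn : ℕ} (w : ZMod nn → ℂ) : Prop :=
  (∀ i, angTo true (w i) (w (i + 1)) ∈ Set.Ioo 0 Real.pi) ∨
  (∀ i, angTo false (w i) (w (i + 1)) ∈ Set.Ioo (-Real.pi) 0)

/-- `ε` is the preferred orientation of the locally convex sequence `w`. -/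
def Preferred {nn : ℕ} (w : ZMod nn → ℂ) (ε : Bool) : Prop :=
  (ε = true ∧ ∀ i, angTo true (w i) (w (i + 1)) ∈ Set.Ioo 0 Real.pi) ∨
  (ε = false ∧ ∀ i, angTo false (w i) (w (i + 1)) ∈ Set.Ioo (-Real.pi) 0)

/-- `P` lists the vertices of a strictly convex polygon in cyclic order. -/
def ConvexCyclic {nn : ℕ} (P : ZMod nn → ℂ) : Prop :=
  (∀ i j, j ≠ i → j ≠ i + 1 → 0 < cross (P (i + 1) - P i) (P j - P i)) ∨
  (∀ i j, j ≠ i → j ≠ i + 1 → cross (P (i + 1) - P i) (P j - P i) < 0)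

def SubAdj (G : OrGraph) (S : Set G.E) (v w : G.V) : Prop :=
  ∃ e ∈ S, G.src e = v ∧ G.dst e = w

/-- `S` is (the edge set of) a connected `2`-valent signed GKM subgraph of `(G, α)`. -/
def IsSigned2ValentSub (G : OrGraph) (α : G.E → Zm 2) (S : Set G.E) : Prop :=
  S.Nonempty ∧
  (∀ e ∈ S, G.rev e ∈ S) ∧
  (∀ v : G.V, (∃ e ∈ S, G.src e = v) → Nat.card {e : G.E // e ∈ S ∧ G.src e = v} = 2) ∧
  (∀ v w : G.V, (∃ e ∈ S, G.src e = v) → (∃ e ∈ S, G.src e = w) →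
      Relation.ReflTransGen (SubAdj G S) v w) ∧
  ∃ T : G.E → G.E → G.E,
    (∀ e f, e ∈ S → f ∈ S → G.src f = G.src e → T e f ∈ S ∧ G.src (T e f) = G.dst e) ∧
    (∀ e, e ∈ S → T e e = G.rev e) ∧
    (∀ e f, e ∈ S → f ∈ S → G.src f = G.src e → T (G.rev e) (T e f) = f) ∧
    (∀ e f, e ∈ S → f ∈ S → G.src f = G.src e → ∃ c : ℤ, α (T e f) = α f + c • α e)

/-- A `2`-valent signed GKM subgraph of polytope type: it is a cycle realized by the
boundary edges of a simple convex `2`-polytope, with labels representing the slopes. -/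
def IsPolytopeTypeSub (G : OrGraph) (α : G.E → Zm 2) (S : Set G.E) : Prop :=
  IsSigned2ValentSub G α S ∧
  ∃ np : ℕ, 3 ≤ np ∧
    ∃ (cyc : ZMod np → G.E) (P : ZMod np → ℂ) (t : ZMod np → ℝ),
      (∀ i, cyc i ∈ S) ∧
      (∀ ed ∈ S, ∃ i, ed = cyc i ∨ ed = G.rev (cyc i)) ∧
      (∀ i, G.dst (cyc i) = G.src (cyc (i + 1))) ∧
      ConvexCyclic P ∧
      (∀ i, 0 < t i) ∧
      (∀ i, P (i + 1) - P i = t i • toC (α (cyc i)))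

/-- A fibration over an `n`-gon base is of product type if the lifts of a path
once around the base are closed. -/
def ProductType {G B : OrGraph} (π : GraphFib G B) {nn : ℕ} (eB : ZMod nn → B.E) : Prop :=
  ∃ l : ZMod nn → G.E,
    ∀ i, ¬ π.Vertical (l i) ∧ π.onE (l i) = eB i ∧ G.dst (l i) = G.src (l (i + 1))

/-- `ℤ`-indexed `n`-gon data for a `2`-valent base graph. -/
structure ZGonData (B : OrGraph) (n : ℕ) where
  v : ℤ → B.V
  eB : ℤ → B.E
  v_per : ∀ i, v (i + n) = v i
  e_per : ∀ i, eB (i + n) = eB i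
  src_e : ∀ i, B.src (eB i) = v i
  dst_e : ∀ i, B.dst (eB i) = v (i + 1)
  v_inj : ∀ i j : ℤ, 0 ≤ i → i < n → 0 ≤ j → j < n → v i = v j → i = j
  v_surj : ∀ w : B.V, ∃ i : ℤ, v i = w
  e_cover : ∀ ed : B.E, ∃ i : ℤ, ed = eB i ∨ ed = B.rev (eB i)

/-- A choice of sign representatives `γ_i` of the base labels with
`γ_i ≡ -γ_{i+2} (mod γ_{i+1})` for all `i ∈ ℤ`. -/
structure GammaData {B : OrGraph} {n : ℕ} (αB : B.E → ZmPM 2) (D : ZGonData B n) where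
  γ : ℤ → Zm 2
  lift : ∀ i, pm (γ i) = αB (D.eB i)
  cong : ∀ i, ∃ c : ℤ, γ i + γ (i + 2) = c • γ (i + 1)

/-- A fiberwise signed `3`-valent GKM fibration over `(B, αB)`. -/
structure FSFOver (B : OrGraph) (αB : B.E → ZmPM 2) : Type 1 where
  G : OrGraph
  αΓ : G.E → ZmPM 2
  hΓ : IsGKM G 3 αΓ
  π : GraphFib G B
  ft : G.E → Zm 2
  isfs : IsFiberwiseSigned αΓ αB π ft

def FSFOver.Equiv {B : OrGraph} {αB : B.E → ZmPM 2} (F F' : FSFOver B αB) : Prop :=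
  Nonempty (FSFEquiv F.αΓ F.π F.ft F'.αΓ F'.π F'.ft)

/-- A signed `3`-valent GKM fibration over the signed graph `(B, sB)`. -/
structure SFOver (B : OrGraph) (sB : B.E → Zm 2) : Type 1 where
  G : OrGraph
  sΓ : G.E → Zm 2
  hΓ : IsSignedGKM G 3 sΓ
  π : GraphFib G B
  issf : IsSignedGKMFib sΓ sB π

def SFOver.Equiv {B : OrGraph} {sB : B.E → Zm 2} (F F' : SFOver B sB) : Prop :=
  Nonempty (SFEquiv F.sΓ F.π F'.sΓ F'.π)

/-- The fibration `F` realizes the classification datum `([k], η)` w.r.t. the fixed data. -/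
def RealizesFS {B : OrGraph} {αB : B.E → ZmPM 2} {n : ℕ} (D : ZGonData B n)
    (Γd : GammaData αB D) (F : FSFOver B αB) (k : ZMod n → ℤ) (η : Bool) : Prop :=
  (η = false ↔ ProductType F.π (fun i : ZMod n => D.eB i.val)) ∧
  ∃ (gE : ℤ → F.G.E) (αf : ℤ → Zm 2) (kk : ℤ → ℤ),
    (∀ i, F.π.Vertical (gE i)) ∧
    (∀ i, F.π.onV (F.G.src (gE i)) = D.v i) ∧
    (∀ i, gE (i + n) = gE i ∨ gE (i + n) = F.G.rev (gE i)) ∧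
    (∀ i, pm (αf i) = F.αΓ (gE i)) ∧
    (∀ i, ∃ c : ℤ, αf (i + 1) = αf i + c • Γd.γ i) ∧
    (∀ i, αf i = kk i • Γd.γ (i - 1) - kk (i - 1) • Γd.γ i) ∧
    (∀ i, kk i ≠ 0) ∧
    (∀ i : ZMod n, k i = kk i.val)

/-- The signed fibration `F` realizes the classification datum `([k], η)`. -/
def RealizesS {B : OrGraph} (sB : B.E → Zm 2) {αB : B.E → ZmPM 2} {n : ℕ}
    (D : ZGonData B n) (Γd : GammaData αB D) (F : SFOver B sB)
    (k : ZMod n → ℤ) (η : Bool) : Prop :=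
  (η = false ↔ ProductType F.π (fun i : ZMod n => D.eB i.val)) ∧
  ∃ (gE : ℤ → F.G.E) (αf : ℤ → Zm 2) (kk : ℤ → ℤ),
    (∀ i, F.π.Vertical (gE i)) ∧
    (∀ i, F.π.onV (F.G.src (gE i)) = D.v i) ∧
    (∀ i, gE (i + n) = gE i ∨ gE (i + n) = F.G.rev (gE i)) ∧
    (∀ i, pm (αf i) = pm (F.sΓ (gE i))) ∧
    (∀ i, ∃ c : ℤ, αf (i + 1) = αf i + c • Γd.γ i) ∧
    (∀ i, αf i = kk i • Γd.γ (i - 1) - kk (i - 1) • Γd.γ i) ∧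
    (∀ i, kk i ≠ 0) ∧
    (∀ i : ZMod n, k i = kk i.val)

def KRel (n : ℕ) (a b : {k : ZMod n → ℤ // ∀ i, k i ≠ 0}) : Prop :=
  a.1 = b.1 ∨ a.1 = - b.1

/-- `((ℤ∖{0})^n)/±1`. -/
def KClass (n : ℕ) := Quot (KRel n)

/-- The Section 7 setting: a signed GKM fibration of twisted type of a `3`-valent
signed GKM graph `Γ` over `B`, the boundary of a 2-dimensional Delzant polytope with
`n` vertices, with `Γ` having `n-1` interior vertices; with the basic edges `f i`, `h i`
over `e i` and the fiber edges `g i`. -/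
structure Section7 : Type 1 where
  n : ℕ
  hn : 3 ≤ n
  G : OrGraph
  B : OrGraph
  aG : G.E → Zm 2
  aB : B.E → Zm 2
  hG : IsSignedGKM G 3 aG
  hB : IsSignedGKM B 2 aB
  π : GraphFib G B
  hfib : IsSignedGKMFib aG aB π
  v : ZMod n → B.V
  e : ZMod n → B.E
  v_bij : Function.Bijective v
  src_e : ∀ i, B.src (e i) = v i
  dst_e : ∀ i, B.dst (e i) = v (i + 1)
  e_cover : ∀ ed : B.E, ∃ i, ed = e i ∨ ed = B.rev (e i)
  P : ZMod n → ℂ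
  tl : ZMod n → ℝ
  tl_pos : ∀ i, 0 < tl i
  polygon : ConvexCyclic P
  slope : ∀ i, P (i + 1) - P i = tl i • toC (aB (e i))
  delzant : ∀ i, (aB (e (i - 1)) 0) * (aB (e i) 1) - (aB (e (i - 1)) 1) * (aB (e i) 0) = 1 ∨
                 (aB (e (i - 1)) 0) * (aB (e i) 1) - (aB (e (i - 1)) 1) * (aB (e i) 0) = -1
  f : ZMod n → G.E
  h : ZMod n → G.E
  g : ZMod n → G.E
  f_horiz : ∀ i, ¬ π.Vertical (f i)
  h_horiz : ∀ i, ¬ π.Vertical (h i)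
  f_over : ∀ i, π.onE (f i) = e i
  h_over : ∀ i, π.onE (h i) = e i
  f_ne_h : ∀ i, f i ≠ h i
  g_vert : ∀ i, π.Vertical (g i)
  g_src : ∀ i, G.src (g i) = G.src (f i)
  g_dst : ∀ i, G.dst (g i) = G.src (h i)
  chain_f : ∀ i : ZMod n, i + 1 ≠ 0 → G.dst (f i) = G.src (f (i + 1))
  chain_h : ∀ i : ZMod n, i + 1 ≠ 0 → G.dst (h i) = G.src (h (i + 1))
  twist_f : G.dst (f (-1)) = G.src (h 0)
  twist_h : G.dst (h (-1)) = G.src (f 0)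
  k : ZMod n → ℤ
  k_ne : ∀ i, k i ≠ 0
  fiberweight : ∀ i, aG (g i) =
    k i • aB (e (i - 1)) - (if i = 0 then - k (i - 1) else k (i - 1)) • aB (e i)
  interior_count : Nat.card {p : G.V // InteriorVtx G aG p} = n - 1

/-- The type II signed structure: the signs of the labels of every second pair
of basic edges are reversed. -/
noncomputable def Section7.alphaII (S : Section7) : S.G.E → Zm 2 :=
  fun ed =>
    if ∃ i : ZMod S.n, Odd i.val ∧
        (ed = S.f i ∨ ed = S.h i ∨ ed = S.G.rev (S.f i) ∨ ed = S.G.rev (S.h i))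
    then - S.aG ed else S.aG ed


/-! ### Auxiliary material for Statement 6 -/

lemma OrGraph.dst_rev (G : OrGraph) (e : G.E) : G.dst (G.rev e) = G.src e := by
  have h := G.src_rev (G.rev e)
  rw [G.rev_rev] at h
  exact h.symm

lemma GraphFib.vertical_rev {G B : OrGraph} (π : GraphFib G B) (e : G.E) :
    π.Vertical (G.rev e) ↔ π.Vertical e := by
  unfold GraphFib.Vertical
  rw [G.src_rev, G.dst_rev]
  exact eq_comm

lemma toC_re' (a : Zm 2) : (toC a).re = (a 0 : ℝ) := by simp [toC]

lemma toC_im' (a : Zm 2) : (toC a).im = (a 1 : ℝ) := by simp [toC]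

lemma toC_neg' (a : Zm 2) : toC (-a) = - toC a := by
  apply Complex.ext <;> simp [toC]

lemma toC_sub_smul (c d : ℤ) (a b : Zm 2) :
    toC (c • a - d • b) = (c : ℝ) • toC a - (d : ℝ) • toC b := by
  apply Complex.ext <;>
    simp [toC, Complex.real_smul, Complex.mul_re, Complex.mul_im] <;> push_cast <;> ring

lemma three_edges (G : OrGraph) (p : G.V)
    (hreg : Fintype.card {e : G.E // G.src e = p} = 3)
    (e1 e2 e3 : G.E) (h1 : G.src e1 = p) (h2 : G.src e2 = p) (h3 : G.src e3 = p)
    (h12 : e1 ≠ e2) (h13 : e1 ≠ e3) (h23 : e2 ≠ e3)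
    (er : G.E) (hr : G.src er = p) : er = e1 ∨ er = e2 ∨ er = e3 := by
  by_contra hc
  push_neg at hc
  obtain ⟨n1, n2, n3⟩ := hc
  have hcard : ({⟨er, hr⟩, ⟨e1, h1⟩, ⟨e2, h2⟩, ⟨e3, h3⟩} :
      Finset {e : G.E // G.src e = p}).card = 4 := by
    rw [Finset.card_insert_of_notMem (by simp [Subtype.ext_iff, n1, n2, n3]),
      Finset.card_insert_of_notMem (by simp [Subtype.ext_iff, h12, h13]),
      Finset.card_insert_of_notMem (by simp [Subtype.ext_iff, h23]),
      Finset.card_singleton]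
  have hle := Finset.card_le_univ ({⟨er, hr⟩, ⟨e1, h1⟩, ⟨e2, h2⟩, ⟨e3, h3⟩} :
      Finset {e : G.E // G.src e = p})
  rw [hcard, hreg] at hle
  omega

lemma cone_aux (G : OrGraph) (α : G.E → Zm 2) (p : G.V) (e3 : G.E)
    (h3 : G.src e3 = p) (a b : ℝ)
    (hother : ∀ er, G.src er = p → er ≠ e3 →
      a * (toC (α er)).re + b * (toC (α er)).im ≤ 0)
    (hab : a ≠ 0 ∨ b ≠ 0)
    (hint : InteriorVtx G α p) :
    0 < a * (toC (α e3)).re + b * (toC (α e3)).im := by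
  obtain ⟨c, hc0, hx⟩ := hint ((a : ℂ) + (b : ℂ) * Complex.I)
  have hre : a = ∑ e ∈ Finset.univ.filter (fun e : G.E => G.src e = p),
      c e * (toC (α e)).re := by
    have h := congrArg Complex.re hx
    simpa [Complex.re_sum, Complex.real_smul, Complex.mul_re] using h
  have him : b = ∑ e ∈ Finset.univ.filter (fun e : G.E => G.src e = p),
      c e * (toC (α e)).im := by
    have h := congrArg Complex.im hx
    simpa [Complex.im_sum, Complex.real_smul, Complex.mul_im] using h
  have hsum : a * a + b * b = ∑ e ∈ Finset.univ.filter (fun e : G.E => G.src e = p),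
      c e * (a * (toC (α e)).re + b * (toC (α e)).im) := by
    calc a * a + b * b
        = a * (∑ e ∈ Finset.univ.filter (fun e : G.E => G.src e = p), c e * (toC (α e)).re)
          + b * (∑ e ∈ Finset.univ.filter (fun e : G.E => G.src e = p), c e * (toC (α e)).im) := by
          rw [← hre, ← him]
      _ = ∑ e ∈ Finset.univ.filter (fun e : G.E => G.src e = p),
          (a * (c e * (toC (α e)).re) + b * (c e * (toC (α e)).im)) := by
          rw [Finset.mul_sum, Finset.mul_sum, ← Finset.sum_add_distrib]
      _ = ∑ e ∈ Finset.univ.filter (fun e : G.E => G.src e = p),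
          c e * (a * (toC (α e)).re + b * (toC (α e)).im) :=
          Finset.sum_congr rfl (fun e _ => by ring)
  have hbound : ∀ e ∈ Finset.univ.filter (fun e : G.E => G.src e = p),
      c e * (a * (toC (α e)).re + b * (toC (α e)).im) ≤
      (if e = e3 then c e * (a * (toC (α e3)).re + b * (toC (α e3)).im) else 0) := by
    intro e he
    by_cases h : e = e3
    · subst h; simp
    · rw [if_neg h]
      have hsrc : G.src e = p := by simpa using he
      exact mul_nonpos_of_nonneg_of_nonpos (hc0 e) (hother e hsrc h)
  have hkey : a * a + b * b ≤ c e3 * (a * (toC (α e3)).re + b * (toC (α e3)).im) := by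
    rw [hsum]
    refine le_trans (Finset.sum_le_sum hbound) ?_
    rw [Finset.sum_ite_eq' (Finset.univ.filter (fun e : G.E => G.src e = p)) e3]
    simp [h3]
  have hpos : 0 < a * a + b * b := by
    rcases hab with h | h
    · nlinarith [mul_self_nonneg b, mul_self_pos.mpr h]
    · nlinarith [mul_self_nonneg a, mul_self_pos.mpr h]
  by_contra hcon
  push_neg at hcon
  have := mul_nonpos_of_nonneg_of_nonpos (hc0 e3) hcon
  linarith

lemma cone_signs (G : OrGraph) (α : G.E → Zm 2) (p : G.V) (e1 e2 e3 : G.E)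
    (h1 : G.src e1 = p) (h2 : G.src e2 = p) (h3 : G.src e3 = p)
    (hall : ∀ er, G.src er = p → er = e1 ∨ er = e2 ∨ er = e3)
    (s t : ℝ)
    (hN : toC (α e3) = s • toC (α e1) + t • toC (α e2))
    (hD : (toC (α e1)).re * (toC (α e2)).im -
      (toC (α e1)).im * (toC (α e2)).re ≠ 0)
    (hint : InteriorVtx G α p) : s < 0 ∧ t < 0 := by
  have hNre : (toC (α e3)).re = s * (toC (α e1)).re + t * (toC (α e2)).re := by
    rw [hN]; simp [Complex.real_smul, Complex.mul_re]
  have hNim : (toC (α e3)).im = s * (toC (α e1)).im + t * (toC (α e2)).im := by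
    rw [hN]; simp [Complex.real_smul, Complex.mul_im]
  set D : ℝ := (toC (α e1)).re * (toC (α e2)).im -
      (toC (α e1)).im * (toC (α e2)).re with hDdef
  have hD2 : 0 < D * D := mul_self_pos.mpr hD
  constructor
  · -- functional (a, b) = (-W.im * D, W.re * D), kills W, sends U to -D²
    set a : ℝ := -(toC (α e2)).im * D with ha
    set b : ℝ := (toC (α e2)).re * D with hb
    have lamU : a * (toC (α e1)).re + b * (toC (α e1)).im = -(D * D) := by
      rw [ha, hb, hDdef]; ring
    have lamW : a * (toC (α e2)).re + b * (toC (α e2)).im = 0 := by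
      rw [ha, hb]; ring
    have hab : a ≠ 0 ∨ b ≠ 0 := by
      by_contra hcon
      push_neg at hcon
      apply hD
      have h1' : (toC (α e2)).im * D = 0 := by
        have := hcon.1; rw [ha] at this; linarith
      have h2' : (toC (α e2)).re * D = 0 := by
        have := hcon.2; rw [hb] at this; linarith
      rcases mul_eq_zero.mp h1' with him0 | hD0
      · rcases mul_eq_zero.mp h2' with hre0 | hD0
        · rw [hDdef, him0, hre0]; ring
        · exact hD0
      · exact hD0
    have hother : ∀ er, G.src er = p → er ≠ e3 →
        a * (toC (α er)).re + b * (toC (α er)).im ≤ 0 := by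
      intro er hsrc hne
      rcases hall er hsrc with rfl | rfl | rfl
      · rw [lamU]; nlinarith
      · rw [lamW]
      · exact absurd rfl hne
    have hpos := cone_aux G α p e3 h3 a b hother hab hint
    rw [hNre, hNim] at hpos
    have hsplit : a * (s * (toC (α e1)).re + t * (toC (α e2)).re) +
        b * (s * (toC (α e1)).im + t * (toC (α e2)).im) =
        s * (a * (toC (α e1)).re + b * (toC (α e1)).im) +
        t * (a * (toC (α e2)).re + b * (toC (α e2)).im) := by ring
    rw [hsplit, lamU, lamW] at hpos
    nlinarith
  · -- functional (a, b) = (U.im * D, -U.re * D), kills U, sends W to -D²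
    set a : ℝ := (toC (α e1)).im * D with ha
    set b : ℝ := -(toC (α e1)).re * D with hb
    have lamU : a * (toC (α e1)).re + b * (toC (α e1)).im = 0 := by
      rw [ha, hb]; ring
    have lamW : a * (toC (α e2)).re + b * (toC (α e2)).im = -(D * D) := by
      rw [ha, hb, hDdef]; ring
    have hab : a ≠ 0 ∨ b ≠ 0 := by
      by_contra hcon
      push_neg at hcon
      apply hD
      have h1' : (toC (α e1)).im * D = 0 := by
        have := hcon.1; rw [ha] at this; linarith
      have h2' : (toC (α e1)).re * D = 0 := by
        have := hcon.2; rw [hb] at this; linarith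
      rcases mul_eq_zero.mp h1' with him0 | hD0
      · rcases mul_eq_zero.mp h2' with hre0 | hD0
        · rw [hDdef, him0, hre0]; ring
        · exact hD0
      · exact hD0
    have hother : ∀ er, G.src er = p → er ≠ e3 →
        a * (toC (α er)).re + b * (toC (α er)).im ≤ 0 := by
      intro er hsrc hne
      rcases hall er hsrc with rfl | rfl | rfl
      · rw [lamU]
      · rw [lamW]; nlinarith
      · exact absurd rfl hne
    have hpos := cone_aux G α p e3 h3 a b hother hab hint
    rw [hNre, hNim] at hpos
    have hsplit : a * (s * (toC (α e1)).re + t * (toC (α e2)).re) +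
        b * (s * (toC (α e1)).im + t * (toC (α e2)).im) =
        s * (a * (toC (α e1)).re + b * (toC (α e1)).im) +
        t * (a * (toC (α e2)).re + b * (toC (α e2)).im) := by ring
    rw [hsplit, lamU, lamW] at hpos
    nlinarith

namespace Section7

variable (S : Section7)

lemma aG_rev (ed : S.G.E) : S.aG (S.G.rev ed) = - S.aG ed := by
  obtain ⟨-, -, C, hC⟩ := S.hG
  exact hC.2.2 ed

lemma aG_horiz (ed : S.G.E) (hh : ¬ S.π.Vertical ed) : S.aG ed = S.aB (S.π.onE ed) := by
  obtain ⟨-, C, CB, -, -, hc⟩ := S.hfib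
  exact hc.1 ed hh

lemma onV_src_f (i : ZMod S.n) : S.π.onV (S.G.src (S.f i)) = S.v i := by
  have h := S.π.src_onE (S.f i) (S.f_horiz i)
  rw [S.f_over, S.src_e] at h
  exact h.symm

lemma onV_src_h (i : ZMod S.n) : S.π.onV (S.G.src (S.h i)) = S.v i := by
  have hg := S.g_vert i
  unfold GraphFib.Vertical at hg
  rw [S.g_src, S.g_dst] at hg
  rw [← hg, S.onV_src_f]

lemma aG_f (i : ZMod S.n) : S.aG (S.f i) = S.aB (S.e i) := by
  rw [S.aG_horiz _ (S.f_horiz i), S.f_over]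

lemma aG_h (i : ZMod S.n) : S.aG (S.h i) = S.aB (S.e i) := by
  rw [S.aG_horiz _ (S.h_horiz i), S.h_over]

/-- The basic edge arriving at `src (f i)`. -/
def prevF (i : ZMod S.n) : S.G.E := if i = 0 then S.h (i - 1) else S.f (i - 1)

/-- The basic edge arriving at `src (h i)`. -/
def prevH (i : ZMod S.n) : S.G.E := if i = 0 then S.f (i - 1) else S.h (i - 1)

lemma dst_prevF (i : ZMod S.n) : S.G.dst (S.prevF i) = S.G.src (S.f i) := by
  unfold prevF
  by_cases h0 : i = 0
  · rw [if_pos h0, h0, zero_sub]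
    exact S.twist_h
  · rw [if_neg h0]
    have hsum : i - 1 + 1 = i := by ring
    have := S.chain_f (i - 1) (by rwa [hsum])
    rwa [hsum] at this

lemma dst_prevH (i : ZMod S.n) : S.G.dst (S.prevH i) = S.G.src (S.h i) := by
  unfold prevH
  by_cases h0 : i = 0
  · rw [if_pos h0, h0, zero_sub]
    exact S.twist_f
  · rw [if_neg h0]
    have hsum : i - 1 + 1 = i := by ring
    have := S.chain_h (i - 1) (by rwa [hsum])
    rwa [hsum] at this

lemma prevF_horiz (i : ZMod S.n) : ¬ S.π.Vertical (S.prevF i) := by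
  unfold prevF
  by_cases h0 : i = 0
  · rw [if_pos h0]; exact S.h_horiz _
  · rw [if_neg h0]; exact S.f_horiz _

lemma prevH_horiz (i : ZMod S.n) : ¬ S.π.Vertical (S.prevH i) := by
  unfold prevH
  by_cases h0 : i = 0
  · rw [if_pos h0]; exact S.f_horiz _
  · rw [if_neg h0]; exact S.h_horiz _

lemma aG_prevF (i : ZMod S.n) : S.aG (S.prevF i) = S.aB (S.e (i - 1)) := by
  unfold prevF
  by_cases h0 : i = 0
  · rw [if_pos h0]; exact S.aG_h _
  · rw [if_neg h0]; exact S.aG_f _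

lemma aG_prevH (i : ZMod S.n) : S.aG (S.prevH i) = S.aB (S.e (i - 1)) := by
  unfold prevH
  by_cases h0 : i = 0
  · rw [if_pos h0]; exact S.aG_f _
  · rw [if_neg h0]; exact S.aG_h _

lemma aG_rev_prevF (i : ZMod S.n) :
    S.aG (S.G.rev (S.prevF i)) = - S.aB (S.e (i - 1)) := by
  rw [S.aG_rev, S.aG_prevF]

lemma aG_rev_prevH (i : ZMod S.n) :
    S.aG (S.G.rev (S.prevH i)) = - S.aB (S.e (i - 1)) := by
  rw [S.aG_rev, S.aG_prevH]

lemma src_rev_prevF (i : ZMod S.n) :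
    S.G.src (S.G.rev (S.prevF i)) = S.G.src (S.f i) := by
  rw [S.G.src_rev, S.dst_prevF]

lemma src_rev_prevH (i : ZMod S.n) :
    S.G.src (S.G.rev (S.prevH i)) = S.G.src (S.h i) := by
  rw [S.G.src_rev, S.dst_prevH]

lemma src_rev_g (i : ZMod S.n) : S.G.src (S.G.rev (S.g i)) = S.G.src (S.h i) := by
  rw [S.G.src_rev, S.g_dst]

lemma ne_of_labels (i : ZMod S.n) (x y : S.G.E)
    (hx : S.aG x = S.aB (S.e i)) (hy : S.aG y = - S.aB (S.e (i - 1))) : x ≠ y := by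
  intro hxy
  have heq : S.aB (S.e i) = - S.aB (S.e (i - 1)) := by rw [← hx, hxy, hy]
  have h0 : (S.aB (S.e (i - 1)) 0) * (S.aB (S.e i) 1) -
      (S.aB (S.e (i - 1)) 1) * (S.aB (S.e i) 0) = 0 := by
    rw [heq]
    simp only [Pi.neg_apply]
    ring
  rcases S.delzant i with hd | hd <;> rw [h0] at hd <;> omega

lemma edges_at_f (i : ZMod S.n) (er : S.G.E) (hr : S.G.src er = S.G.src (S.f i)) :
    er = S.f i ∨ er = S.G.rev (S.prevF i) ∨ er = S.g i := by
  refine three_edges S.G (S.G.src (S.f i)) (S.hG.1 _) _ _ _ rfl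
    (S.src_rev_prevF i) (S.g_src i) ?_ ?_ ?_ er hr
  · exact S.ne_of_labels i _ _ (S.aG_f i) (S.aG_rev_prevF i)
  · intro hh
    exact S.f_horiz i (by rw [hh]; exact S.g_vert i)
  · intro hh
    have hv := S.g_vert i
    rw [← hh, S.π.vertical_rev] at hv
    exact S.prevF_horiz i hv

lemma edges_at_h (i : ZMod S.n) (er : S.G.E) (hr : S.G.src er = S.G.src (S.h i)) :
    er = S.h i ∨ er = S.G.rev (S.prevH i) ∨ er = S.G.rev (S.g i) := by
  refine three_edges S.G (S.G.src (S.h i)) (S.hG.1 _) _ _ _ rfl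
    (S.src_rev_prevH i) (S.src_rev_g i) ?_ ?_ ?_ er hr
  · exact S.ne_of_labels i _ _ (S.aG_h i) (S.aG_rev_prevH i)
  · intro hh
    have hv := S.g_vert i
    rw [← S.π.vertical_rev, ← hh] at hv
    exact S.h_horiz i hv
  · intro hh
    have hv := S.g_vert i
    rw [← S.π.vertical_rev, ← hh, S.π.vertical_rev] at hv
    exact S.prevH_horiz i hv

lemma vertex_class (p : S.G.V) :
    (∃ i, p = S.G.src (S.f i)) ∨ (∃ i, p = S.G.src (S.h i)) := by
  have hconn := S.hG.2.1 (S.G.src (S.f 0)) p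
  induction hconn with
  | refl => exact Or.inl ⟨0, rfl⟩
  | @tail w p' hrt hstep ih =>
    obtain ⟨er, hsrc, hdst⟩ := hstep
    rcases ih with ⟨i, hi⟩ | ⟨i, hi⟩
    · rcases S.edges_at_f i er (by rw [hsrc]; exact hi) with rfl | rfl | rfl
      · by_cases h1 : i + 1 = 0
        · right
          refine ⟨0, ?_⟩
          have h2 : i = -1 := by linear_combination h1
          rw [← hdst, h2, S.twist_f]
        · left; exact ⟨i + 1, by rw [← hdst, S.chain_f i h1]⟩
      · rw [S.G.dst_rev] at hdst
        unfold prevF at hdst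
        by_cases h0 : i = 0
        · rw [if_pos h0] at hdst; right; exact ⟨i - 1, hdst.symm⟩
        · rw [if_neg h0] at hdst; left; exact ⟨i - 1, hdst.symm⟩
      · right; exact ⟨i, by rw [← hdst, S.g_dst]⟩
    · rcases S.edges_at_h i er (by rw [hsrc]; exact hi) with rfl | rfl | rfl
      · by_cases h1 : i + 1 = 0
        · left
          refine ⟨0, ?_⟩
          have h2 : i = -1 := by linear_combination h1
          rw [← hdst, h2, S.twist_h]
        · right; exact ⟨i + 1, by rw [← hdst, S.chain_h i h1]⟩
      · rw [S.G.dst_rev] at hdst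
        unfold prevH at hdst
        by_cases h0 : i = 0
        · rw [if_pos h0] at hdst; left; exact ⟨i - 1, hdst.symm⟩
        · rw [if_neg h0] at hdst; right; exact ⟨i - 1, hdst.symm⟩
      · rw [S.G.dst_rev, S.g_src] at hdst; left; exact ⟨i, hdst.symm⟩

lemma vertex_in_fiber (p : S.G.V) (j : ZMod S.n) (hpj : S.π.onV p = S.v j) :
    p = S.G.src (S.f j) ∨ p = S.G.src (S.h j) := by
  rcases S.vertex_class p with ⟨i, hi⟩ | ⟨i, hi⟩
  · left
    rw [hi, S.onV_src_f] at hpj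
    rw [hi, S.v_bij.1 hpj]
  · right
    rw [hi, S.onV_src_h] at hpj
    rw [hi, S.v_bij.1 hpj]

/-- The second coefficient in the fiber weight formula. -/
def mco (i : ZMod S.n) : ℤ := if i = 0 then - S.k (i - 1) else S.k (i - 1)

lemma fw (i : ZMod S.n) :
    S.aG (S.g i) = S.k i • S.aB (S.e (i - 1)) - S.mco i • S.aB (S.e i) := by
  unfold mco
  exact S.fiberweight i

lemma mco_succ (j : ZMod S.n) (hj : j + 1 ≠ 0) : S.mco (j + 1) = S.k j := by
  unfold mco
  rw [if_neg hj]
  congr 1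
  ring

lemma mco_zero : S.mco 0 = - S.k (-1) := by
  unfold mco
  rw [if_pos rfl, zero_sub]

lemma det_ne (i : ZMod S.n) :
    (toC (S.aB (S.e i))).re * (- toC (S.aB (S.e (i - 1)))).im -
      (toC (S.aB (S.e i))).im * (- toC (S.aB (S.e (i - 1)))).re ≠ 0 := by
  simp only [Complex.neg_im, Complex.neg_re, toC_re', toC_im']
  intro hcon
  have h0 : (S.aB (S.e (i - 1)) 0) * (S.aB (S.e i) 1) -
      (S.aB (S.e (i - 1)) 1) * (S.aB (S.e i) 0) = 0 := by
    have : ((S.aB (S.e (i - 1)) 0 : ℝ)) * (S.aB (S.e i) 1) -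
        ((S.aB (S.e (i - 1)) 1 : ℝ)) * (S.aB (S.e i) 0) = 0 := by linarith [hcon]
    exact_mod_cast this
  rcases S.delzant i with hd | hd <;> rw [h0] at hd <;> omega

lemma intF (i : ZMod S.n) (hint : InteriorVtx S.G S.aG (S.G.src (S.f i))) :
    0 < S.k i ∧ 0 < S.mco i := by
  have hN : toC (S.aG (S.g i)) =
      (-(S.mco i : ℝ)) • toC (S.aG (S.f i)) +
      (-(S.k i : ℝ)) • toC (S.aG (S.G.rev (S.prevF i))) := by
    rw [S.fw i, toC_sub_smul, S.aG_f, S.aG_rev_prevF, toC_neg']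
    module
  have hD : (toC (S.aG (S.f i))).re * (toC (S.aG (S.G.rev (S.prevF i)))).im -
      (toC (S.aG (S.f i))).im * (toC (S.aG (S.G.rev (S.prevF i)))).re ≠ 0 := by
    rw [S.aG_f, S.aG_rev_prevF, toC_neg']
    exact S.det_ne i
  have hc := cone_signs S.G S.aG (S.G.src (S.f i)) (S.f i) (S.G.rev (S.prevF i)) (S.g i)
    rfl (S.src_rev_prevF i) (S.g_src i) (S.edges_at_f i) _ _ hN hD hint
  constructor
  · have h2 := hc.2
    have : (0 : ℝ) < (S.k i : ℝ) := by linarith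
    exact_mod_cast this
  · have h1 := hc.1
    have : (0 : ℝ) < (S.mco i : ℝ) := by linarith
    exact_mod_cast this

lemma intH (i : ZMod S.n) (hint : InteriorVtx S.G S.aG (S.G.src (S.h i))) :
    S.k i < 0 ∧ S.mco i < 0 := by
  have hN : toC (S.aG (S.G.rev (S.g i))) =
      ((S.mco i : ℝ)) • toC (S.aG (S.h i)) +
      ((S.k i : ℝ)) • toC (S.aG (S.G.rev (S.prevH i))) := by
    rw [S.aG_rev, S.fw i]
    rw [show -(S.k i • S.aB (S.e (i - 1)) - S.mco i • S.aB (S.e i)) =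
      S.mco i • S.aB (S.e i) - S.k i • S.aB (S.e (i - 1)) by ring]
    rw [toC_sub_smul, S.aG_h, S.aG_rev_prevH, toC_neg']
    module
  have hD : (toC (S.aG (S.h i))).re * (toC (S.aG (S.G.rev (S.prevH i)))).im -
      (toC (S.aG (S.h i))).im * (toC (S.aG (S.G.rev (S.prevH i)))).re ≠ 0 := by
    rw [S.aG_h, S.aG_rev_prevH, toC_neg']
    exact S.det_ne i
  have hc := cone_signs S.G S.aG (S.G.src (S.h i)) (S.h i) (S.G.rev (S.prevH i))
    (S.G.rev (S.g i)) rfl (S.src_rev_prevH i) (S.src_rev_g i) (S.edges_at_h i)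
    _ _ hN hD hint
  constructor
  · have h2 := hc.2
    have : (S.k i : ℝ) < 0 := by linarith
    exact_mod_cast this
  · have h1 := hc.1
    have : (S.mco i : ℝ) < 0 := by linarith
    exact_mod_cast this

end Section7

/-- in the Section 7 setting, if two fibers are connected by a basic
edge and both contain an interior vertex, then the interior vertices are connected
by a basic edge. -/
theorem statement6 (S : Section7) (ed : S.G.E) (hhor : ¬ S.π.Vertical ed)
    (p q : S.G.V)
    (hp : S.π.onV p = S.π.onV (S.G.src ed)) (hq : S.π.onV q = S.π.onV (S.G.dst ed))
    (hpint : InteriorVtx S.G S.aG p) (hqint : InteriorVtx S.G S.aG q) :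
    ∃ ed' : S.G.E, ¬ S.π.Vertical ed' ∧ S.G.src ed' = p ∧ S.G.dst ed' = q := by
  have hA : S.B.src (S.π.onE ed) = S.π.onV (S.G.src ed) := S.π.src_onE ed hhor
  have hBv : S.B.dst (S.π.onE ed) = S.π.onV (S.G.dst ed) := S.π.dst_onE ed hhor
  obtain ⟨j, hb | hb⟩ := S.e_cover (S.π.onE ed)
  · -- the base edge is `e j`, so `p` lies over `v j` and `q` over `v (j+1)`
    have hpj : S.π.onV p = S.v j := by rw [hp, ← hA, hb, S.src_e]
    have hqj : S.π.onV q = S.v (j + 1) := by rw [hq, ← hBv, hb, S.dst_e]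
    by_cases hj : j + 1 = 0
    · have hj' : j = -1 := by linear_combination hj
      rcases S.vertex_in_fiber p j hpj with hpf | hph <;>
        rcases S.vertex_in_fiber q (j + 1) hqj with hqf | hqh
      · exfalso
        have h1 := S.intF j (by rwa [← hpf])
        have h2 := S.intF (j + 1) (by rwa [← hqf])
        rw [hj] at h2
        have h3 := h2.2
        rw [S.mco_zero] at h3
        have h4 := h1.1
        rw [hj'] at h4
        omega
      · refine ⟨S.f j, S.f_horiz j, hpf.symm, ?_⟩
        rw [hj'] at hqh ⊢
        rw [S.twist_f]
        rw [show (-1 : ZMod S.n) + 1 = 0 by ring] at hqh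
        exact hqh.symm
      · refine ⟨S.h j, S.h_horiz j, hph.symm, ?_⟩
        rw [hj'] at hqf ⊢
        rw [S.twist_h]
        rw [show (-1 : ZMod S.n) + 1 = 0 by ring] at hqf
        exact hqf.symm
      · exfalso
        have h1 := S.intH j (by rwa [← hph])
        have h2 := S.intH (j + 1) (by rwa [← hqh])
        rw [hj] at h2
        have h3 := h2.2
        rw [S.mco_zero] at h3
        have h4 := h1.1
        rw [hj'] at h4
        omega
    · rcases S.vertex_in_fiber p j hpj with hpf | hph <;>
        rcases S.vertex_in_fiber q (j + 1) hqj with hqf | hqh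
      · exact ⟨S.f j, S.f_horiz j, hpf.symm, by rw [S.chain_f j hj]; exact hqf.symm⟩
      · exfalso
        have h1 := S.intF j (by rwa [← hpf])
        have h2 := S.intH (j + 1) (by rwa [← hqh])
        have h3 := h2.2
        rw [S.mco_succ j hj] at h3
        have h4 := h1.1
        omega
      · exfalso
        have h1 := S.intH j (by rwa [← hph])
        have h2 := S.intF (j + 1) (by rwa [← hqf])
        have h3 := h2.2
        rw [S.mco_succ j hj] at h3
        have h4 := h1.1
        omega
      · exact ⟨S.h j, S.h_horiz j, hph.symm, by rw [S.chain_h j hj]; exact hqh.symm⟩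
  · -- the base edge is `rev (e j)`, so `p` lies over `v (j+1)` and `q` over `v j`
    have hpj : S.π.onV p = S.v (j + 1) := by
      rw [hp, ← hA, hb, S.B.src_rev, S.dst_e]
    have hqj : S.π.onV q = S.v j := by
      rw [hq, ← hBv, hb, S.B.dst_rev, S.src_e]
    have hrevf : ¬ S.π.Vertical (S.G.rev (S.f j)) := by
      rw [S.π.vertical_rev]; exact S.f_horiz j
    have hrevh : ¬ S.π.Vertical (S.G.rev (S.h j)) := by
      rw [S.π.vertical_rev]; exact S.h_horiz j
    by_cases hj : j + 1 = 0
    · have hj' : j = -1 := by linear_combination hj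
      rcases S.vertex_in_fiber p (j + 1) hpj with hpf | hph <;>
        rcases S.vertex_in_fiber q j hqj with hqf | hqh
      · exfalso
        have h1 := S.intF (j + 1) (by rwa [← hpf])
        have h2 := S.intF j (by rwa [← hqf])
        rw [hj] at h1
        have h3 := h1.2
        rw [S.mco_zero] at h3
        have h4 := h2.1
        rw [hj'] at h4
        omega
      · refine ⟨S.G.rev (S.h j), hrevh, ?_, by rw [S.G.dst_rev]; exact hqh.symm⟩
        rw [S.G.src_rev, hj', S.twist_h]
        rw [hj] at hpf
        exact hpf.symm
      · refine ⟨S.G.rev (S.f j), hrevf, ?_, by rw [S.G.dst_rev]; exact hqf.symm⟩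
        rw [S.G.src_rev, hj', S.twist_f]
        rw [hj] at hph
        exact hph.symm
      · exfalso
        have h1 := S.intH (j + 1) (by rwa [← hph])
        have h2 := S.intH j (by rwa [← hqh])
        rw [hj] at h1
        have h3 := h1.2
        rw [S.mco_zero] at h3
        have h4 := h2.1
        rw [hj'] at h4
        omega
    · rcases S.vertex_in_fiber p (j + 1) hpj with hpf | hph <;>
        rcases S.vertex_in_fiber q j hqj with hqf | hqh
      · refine ⟨S.G.rev (S.f j), hrevf, ?_, by rw [S.G.dst_rev]; exact hqf.symm⟩
        rw [S.G.src_rev, S.chain_f j hj]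
        exact hpf.symm
      · exfalso
        have h1 := S.intF (j + 1) (by rwa [← hpf])
        have h2 := S.intH j (by rwa [← hqh])
        have h3 := h1.2
        rw [S.mco_succ j hj] at h3
        have h4 := h2.1
        omega
      · exfalso
        have h1 := S.intH (j + 1) (by rwa [← hph])
        have h2 := S.intF j (by rwa [← hqf])
        have h3 := h1.2
        rw [S.mco_succ j hj] at h3
        have h4 := h2.1
        omega
      · refine ⟨S.G.rev (S.h j), hrevh, ?_, by rw [S.G.dst_rev]; exact hqh.symm⟩
        rw [S.G.src_rev, S.chain_h j hj]
        exact hph.symm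

end GKMPaper
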